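/- Let A ⊆ ℕ^n be the lattice points of a rational polyhedral cone and let B ⊆ ℤ^n be a set of the form {β ∈ ℤ^n : ⟨β, u_ρ⟩ ≥ −m_ρ for ρ in a finite index set}, where each u_ρ ∈ ℤ^n and m_ρ ∈ ℤ, and A = {α ∈ ℤ^n : ⟨α, u_ρ⟩ ≥ 0 for all ρ}. Then there exists a finite subset B_0 ⊆ B with B = B_0 + A. -/

import Mathlib

open Pointwise

/-- Dickson's lemma: any set in `ι → ℕ` (with `ι` finite) has a finite dominating
subset of minimal elements. -/
lemma exists_finite_dominating {ι : Type} [Fintype ι] (S : Set (ι → ℕ)) :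
    ∃ S₀ : Finset (ι → ℕ), ↑S₀ ⊆ S ∧ ∀ s ∈ S, ∃ t ∈ S₀, t ≤ s := by
  classical
  have hpwo : S.IsPWO := Set.isPWO_of_wellQuasiOrderedLE S
  have hwf : WellFounded ((· < ·) : (ι → ℕ) → (ι → ℕ) → Prop) := by
    have := (Set.isPWO_of_wellQuasiOrderedLE (Set.univ : Set (ι → ℕ))).isWF
    rw [Set.isWF_univ_iff] at this
    exact this.wf
  -- the set of minimal elements of S
  set M : Set (ι → ℕ) := {s ∈ S | ∀ t ∈ S, ¬ t < s} with hM
  have hManti : IsAntichain (· ≤ ·) M := by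
    intro a ha b hb hab hle
    exact hb.2 a ha.1 (lt_of_le_of_ne hle hab)
  have hMfin : M.Finite :=
    hManti.finite_of_partiallyWellOrderedOn (hpwo.mono (fun x hx => hx.1))
  refine ⟨hMfin.toFinset, ?_, ?_⟩
  · intro x hx
    rw [Set.Finite.coe_toFinset] at hx
    exact hx.1
  · intro s hs
    obtain ⟨t, ht, htmin⟩ := hwf.has_min {x ∈ S | x ≤ s} ⟨s, hs, le_rfl⟩
    refine ⟨t, ?_, ht.2⟩
    simp only [Set.Finite.mem_toFinset, hM, Set.mem_setOf_eq]
    refine ⟨ht.1, fun x hx hlt => htmin x ⟨hx, hlt.le.trans ht.2⟩ hlt⟩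

/-- Dickson's lemma step in Proposition 4.5: `B = {β : ⟨β, u ρ⟩ ≥ -m ρ}` is a finitely
generated module over the monoid `A = {α : ⟨α, u ρ⟩ ≥ 0}`, i.e. `B = B₀ + A` for a finite
subset `B₀ ⊆ B`. -/
theorem stmt_5 (n : ℕ) (ι : Type) [Fintype ι] (u : ι → Fin n → ℤ) (m : ι → ℤ)
    (A B : Set (Fin n → ℤ))
    (hA : A = {α | ∀ ρ, 0 ≤ ∑ j, α j * u ρ j})
    (hB : B = {β | ∀ ρ, -(m ρ) ≤ ∑ j, β j * u ρ j}) :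
    ∃ B₀ : Finset (Fin n → ℤ), ↑B₀ ⊆ B ∧ B = ↑B₀ + A := by
  classical
  set f : (Fin n → ℤ) → (ι → ℕ) := fun β ρ => (∑ j, β j * u ρ j + m ρ).toNat with hf
  obtain ⟨S₀, hS₀sub, hS₀dom⟩ := exists_finite_dominating (f '' B)
  -- choose preimages
  have hchoice : ∀ t ∈ S₀, ∃ β ∈ B, f β = t := by
    intro t ht
    obtain ⟨β, hβ, hfb⟩ := hS₀sub ht
    exact ⟨β, hβ, hfb⟩
  choose g hg hgf using hchoice
  refine ⟨S₀.attach.image (fun t => g t.1 t.2), ?_, ?_⟩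
  · intro x hx
    simp only [Finset.coe_image, Set.mem_image, Finset.mem_coe, Finset.mem_attach] at hx
    obtain ⟨t, -, rfl⟩ := hx
    exact hg t.1 t.2
  · ext β
    constructor
    · intro hβ
      obtain ⟨t, htS₀, hts⟩ := hS₀dom (f β) ⟨β, hβ, rfl⟩
      set β₀ := g t htS₀ with hβ₀
      have hβ₀B : β₀ ∈ B := hg t htS₀
      have hβ₀f : f β₀ = t := hgf t htS₀
      refine Set.mem_add.2 ⟨β₀, ?_, β - β₀, ?_, by ring⟩
      · simp only [Finset.coe_image, Set.mem_image, Finset.mem_coe, Finset.mem_attach]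
        exact ⟨⟨t, htS₀⟩, trivial, rfl⟩
      · rw [hA]
        intro ρ
        have h1 : 0 ≤ ∑ j, β₀ j * u ρ j + m ρ := by
          have := (hB ▸ hβ₀B) ρ
          linarith
        have h2 : 0 ≤ ∑ j, β j * u ρ j + m ρ := by
          have := (hB ▸ hβ) ρ
          linarith
        have h3 : (∑ j, β₀ j * u ρ j + m ρ).toNat ≤ (∑ j, β j * u ρ j + m ρ).toNat := by
          have := hts ρ
          rw [← hβ₀f] at this
          exact this
        have h4 : ∑ j, β₀ j * u ρ j + m ρ ≤ ∑ j, β j * u ρ j + m ρ := by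
          rw [← Int.toNat_of_nonneg h1, ← Int.toNat_of_nonneg h2]
          exact_mod_cast h3
        have : ∑ j, (β - β₀) j * u ρ j = (∑ j, β j * u ρ j) - ∑ j, β₀ j * u ρ j := by
          rw [← Finset.sum_sub_distrib]
          congr 1; ext j; simp [Pi.sub_apply]; ring
        rw [this]
        linarith
    · intro hβ
      obtain ⟨x, hx, y, hy, rfl⟩ := Set.mem_add.1 hβ
      have hxB : x ∈ B := by
        simp only [Finset.coe_image, Set.mem_image, Finset.mem_coe] at hx
        obtain ⟨t, -, rfl⟩ := hx
        exact hg t.1 t.2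
      rw [hB] at hxB ⊢
      rw [hA] at hy
      intro ρ
      have h1 := hxB ρ
      have h2 := hy ρ
      have : ∑ j, (x + y) j * u ρ j = (∑ j, x j * u ρ j) + ∑ j, y j * u ρ j := by
        rw [← Finset.sum_add_distrib]
        congr 1; ext j; simp [Pi.add_apply]; ring
      rw [this]
      linarith
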